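/- For integers 1 ≤ j ≤ i ≤ n, the difference f_{i,j} - x_j · g_{i,j} lies in the principal ideal generated by g_{i,j-1} in ℚ[x_1,...,x_n]. In particular, for j = 1 one has the exact equality f_{i,1} = x_1 · g_{i,1}. -/
import Mathlib


open MvPolynomial

/-- The variable `x_m` (1-indexed) in `ℚ[x_1,…,x_n]`. -/
noncomputable def xv (n : ℕ) (m : ℕ) : MvPolynomial (Fin n) ℚ :=
  if h : m - 1 < n then X ⟨m - 1, h⟩ else 0

/-- `f_{i,j} = ∑_{k=1}^{j} (∏_{ℓ=j+1}^{i} (x_k - x_ℓ)) x_k`. -/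
noncomputable def fpoly (n i j : ℕ) : MvPolynomial (Fin n) ℚ :=
  ∑ k ∈ Finset.Icc 1 j, (∏ l ∈ Finset.Icc (j+1) i, (xv n k - xv n l)) * xv n k

/-- `g_{i,j} = ∑_{k=1}^{j} ∏_{ℓ=j+1}^{i} (x_k - x_ℓ)`. -/
noncomputable def gpoly (n i j : ℕ) : MvPolynomial (Fin n) ℚ :=
  ∑ k ∈ Finset.Icc 1 j, ∏ l ∈ Finset.Icc (j+1) i, (xv n k - xv n l)

/-- `h` is a Hessenberg function on `{1,…,n}`. -/
def IsHessenberg (n : ℕ) (h : ℕ → ℕ) : Prop :=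
  (∀ i, 1 ≤ i → i ≤ n → i ≤ h i ∧ h i ≤ n) ∧
  (∀ i, 1 ≤ i → i < n → h i ≤ h (i + 1))

lemma fpoly_key (n i j : ℕ) (hj : 1 ≤ j) (hji : j ≤ i) :
    fpoly n i j - xv n j * gpoly n i j = gpoly n i (j - 1) := by
  obtain ⟨j, rfl⟩ : ∃ j', j = j' + 1 := ⟨j - 1, (Nat.succ_pred_eq_of_pos hj).symm⟩
  simp only [Nat.add_sub_cancel]
  unfold fpoly gpoly
  rw [Finset.mul_sum, ← Finset.sum_sub_distrib]
  have hins : Finset.Icc 1 (j+1) = insert (j+1) (Finset.Icc 1 j) := by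
    ext x; simp [Finset.mem_Icc]; omega
  rw [hins, Finset.sum_insert (by simp)]
  have : (∏ l ∈ Finset.Icc (j+1+1) i, (xv n (j+1) - xv n l)) * xv n (j+1) -
      xv n (j+1) * ∏ l ∈ Finset.Icc (j+1+1) i, (xv n (j+1) - xv n l) = 0 := by ring
  rw [this, zero_add]
  apply Finset.sum_congr rfl
  intro k hk
  have hmem : Finset.Icc (j+1) i = insert (j+1) (Finset.Icc (j+1+1) i) := by
    ext x; simp [Finset.mem_Icc]; omega
  rw [hmem, Finset.prod_insert (by simp)]
  ring

theorem fpoly_eq_x_mul_gpoly_mod (n i j : ℕ) (hj : 1 ≤ j) (hji : j ≤ i) (hin : i ≤ n) :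
    fpoly n i j - xv n j * gpoly n i j ∈ Ideal.span {gpoly n i (j - 1)} ∧
    fpoly n i 1 = xv n 1 * gpoly n i 1 := by
  constructor
  · rw [fpoly_key n i j hj hji]
    exact Ideal.subset_span rfl
  · have h1 := fpoly_key n i 1 le_rfl (hj.trans hji)
    have : gpoly n i 0 = 0 := by simp [gpoly]
    rw [this] at h1
    exact sub_eq_zero.mp h1
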